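/- For every natural number n ≥ 3, the function r ↦ (1−r)(1+1/r)^{−n} on (0,1) attains its maximum at r = (√(n²+6n+1) − n − 1)/2. -/

import Mathlib

open Set

private lemma stmt10_deriv_aux (n : ℕ) (r : ℝ) (hr : 1 + r ≠ 0) :
    HasDerivAt (fun r : ℝ => (1 - r) * (r / (1 + r)) ^ n)
      ((-1) * (r / (1 + r)) ^ n +
        (1 - r) * ((n : ℝ) * (r / (1 + r)) ^ (n - 1) *
          ((1 * (1 + r) - r * 1) / (1 + r) ^ 2))) r := by
  have h1 : HasDerivAt (fun r : ℝ => 1 - r) (-1) r := by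
    exact ((hasDerivAt_const r (1 : ℝ)).sub (hasDerivAt_id' r)).congr_deriv (by ring)
  have h2 : HasDerivAt (fun r : ℝ => r / (1 + r))
      ((1 * (1 + r) - r * 1) / (1 + r) ^ 2) r := by
    exact ((hasDerivAt_id' r).div
      (((hasDerivAt_const r (1 : ℝ)).add (hasDerivAt_id' r))) hr).congr_deriv (by simp)
  exact h1.mul (h2.pow n)

private lemma stmt10_deriv_eq (n : ℕ) (hn : 1 ≤ n) (r : ℝ) (hr : 0 < r) :
    deriv (fun r : ℝ => (1 - r) * (r / (1 + r)) ^ n) r =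
      (r / (1 + r)) ^ (n - 1) * (((n : ℝ) * (1 - r) - r * (1 + r)) / (1 + r) ^ 2) := by
  have h1r : (0 : ℝ) < 1 + r := by linarith
  rw [(stmt10_deriv_aux n r h1r.ne').deriv]
  have hpow : (r / (1 + r)) ^ n = (r / (1 + r)) ^ (n - 1) * (r / (1 + r)) := by
    rw [← pow_succ, Nat.sub_add_cancel hn]
  rw [hpow]
  field_simp
  ring

theorem stmt_10 (n : ℕ) (hn : 3 ≤ n) :
    (Real.sqrt ((n : ℝ) ^ 2 + 6 * n + 1) - n - 1) / 2 ∈ Set.Ioo (0 : ℝ) 1 ∧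
    IsMaxOn (fun r : ℝ => (1 - r) * (r / (1 + r)) ^ n) (Set.Ioo (0 : ℝ) 1)
      ((Real.sqrt ((n : ℝ) ^ 2 + 6 * n + 1) - n - 1) / 2) := by
  have hn3 : (3 : ℝ) ≤ (n : ℝ) := by exact_mod_cast hn
  set s : ℝ := Real.sqrt ((n : ℝ) ^ 2 + 6 * n + 1) with hs_def
  have hnonneg : (0 : ℝ) ≤ (n : ℝ) ^ 2 + 6 * n + 1 := by positivity
  have hs2 : s ^ 2 = (n : ℝ) ^ 2 + 6 * n + 1 := Real.sq_sqrt hnonneg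
  have hs_nonneg : 0 ≤ s := Real.sqrt_nonneg _
  set r₀ : ℝ := (s - n - 1) / 2 with hr₀_def
  have hs_lb : (n : ℝ) + 1 < s := by
    nlinarith [hs2, hs_nonneg]
  have hs_ub : s < (n : ℝ) + 3 := by
    nlinarith [hs2, hs_nonneg]
  have hr₀_pos : 0 < r₀ := by simp only [hr₀_def]; linarith
  have hr₀_lt : r₀ < 1 := by simp only [hr₀_def]; linarith
  have hkey : r₀ ^ 2 + ((n : ℝ) + 1) * r₀ = n := by
    simp only [hr₀_def]; nlinarith [hs2]
  refine ⟨⟨hr₀_pos, hr₀_lt⟩, ?_⟩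
  set f : ℝ → ℝ := fun r : ℝ => (1 - r) * (r / (1 + r)) ^ n with hf_def
  have hcont : ContinuousOn f (Icc (0 : ℝ) 1) := by
    apply ContinuousOn.mul
    · exact (continuousOn_const.sub continuousOn_id)
    · apply ContinuousOn.pow
      apply ContinuousOn.div continuousOn_id (continuousOn_const.add continuousOn_id)
      intro x hx
      have : (0 : ℝ) ≤ x := hx.1
      exact ne_of_gt (show (0:ℝ) < 1 + x by linarith)
  have hn1 : 1 ≤ n := by omega
  -- monotone on [0, r₀]
  have hmono : StrictMonoOn f (Icc (0 : ℝ) r₀) := by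
    apply strictMonoOn_of_deriv_pos (convex_Icc _ _)
      (hcont.mono (Icc_subset_Icc le_rfl hr₀_lt.le))
    intro x hx
    rw [interior_Icc] at hx
    obtain ⟨hx0, hxr⟩ := hx
    rw [stmt10_deriv_eq n hn1 x hx0]
    have h1x : (0 : ℝ) < 1 + x := by linarith
    have hqpos : 0 < (x / (1 + x)) ^ (n - 1) := by positivity
    have hnum : 0 < (n : ℝ) * (1 - x) - x * (1 + x) := by
      nlinarith [mul_pos (sub_pos.2 hxr) (by linarith : (0:ℝ) < r₀ + x + n + 1)]
    positivity
  -- antitone on [r₀, 1]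
  have hanti : StrictAntiOn f (Icc r₀ (1 : ℝ)) := by
    apply strictAntiOn_of_deriv_neg (convex_Icc _ _)
      (hcont.mono (Icc_subset_Icc hr₀_pos.le le_rfl))
    intro x hx
    rw [interior_Icc] at hx
    obtain ⟨hxr, hx1⟩ := hx
    have hx0 : 0 < x := lt_trans hr₀_pos hxr
    rw [stmt10_deriv_eq n hn1 x hx0]
    have h1x : (0 : ℝ) < 1 + x := by linarith
    have hqpos : 0 < (x / (1 + x)) ^ (n - 1) := by positivity
    have hnum : (n : ℝ) * (1 - x) - x * (1 + x) < 0 := by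
      nlinarith [mul_pos (sub_pos.2 hxr) (by linarith : (0:ℝ) < x + r₀ + n + 1)]
    have hden : (0 : ℝ) < (1 + x) ^ 2 := by positivity
    exact mul_neg_of_pos_of_neg hqpos (div_neg_of_neg_of_pos hnum hden)
  intro x hx
  obtain ⟨hx0, hx1⟩ := hx
  simp only [mem_setOf_eq]
  rcases le_total x r₀ with h | h
  · exact hmono.monotoneOn ⟨hx0.le, h⟩ ⟨hr₀_pos.le, le_rfl⟩ h
  · exact hanti.antitoneOn ⟨le_rfl, hr₀_lt.le⟩ ⟨h, hx1.le⟩ h
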